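/- If B = 0 and 100 ≤ A ≤ K/20, then for A balls thrown independently and uniformly into K bins, the variance of the number of nonempty bins is strictly less than 4A²/K. -/

import Mathlib

open Finset

/-- The number of nonempty bins when `A` balls are placed into `K` bins according to
`g`. -/
def nonemptyBins (A K : ℕ) (g : Fin A → Fin K) : ℕ :=
  (Finset.univ.filter (fun i : Fin K => ∃ a, g a = i)).card

lemma sumE (A K : ℕ) (S : Finset (Fin K)) :
    ∑ g : Fin A → Fin K, (if ∀ a, g a ∉ S then (1:ℝ) else 0)
      = ((K - S.card : ℕ) : ℝ) ^ A := by
  rw [Finset.sum_boole]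
  have h : (univ.filter (fun g : Fin A → Fin K => ∀ a, g a ∉ S)) = Fintype.piFinset (fun _ => Sᶜ) := by
    ext g; simp [Fintype.mem_piFinset]
  rw [h, Fintype.card_piFinset]
  simp [Finset.card_compl]

lemma nonempty_eq_sum (A K : ℕ) (g : Fin A → Fin K) :
    (nonemptyBins A K g : ℝ) = ∑ i : Fin K, (1 - if ∀ a, g a ∉ ({i} : Finset (Fin K)) then (1:ℝ) else 0) := by
  rw [nonemptyBins, ← Finset.sum_boole]
  congr 1; ext i
  by_cases h : ∃ a, g a = i
  · obtain ⟨a, ha⟩ := h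
    rw [if_pos ⟨a, ha⟩, if_neg (by push_neg; exact ⟨a, by simp [ha]⟩)]
    ring
  · push_neg at h
    rw [if_neg (by push_neg; exact h), if_pos (by simpa using h)]
    ring

lemma card_univ_fun (A K : ℕ) : (Fintype.card (Fin A → Fin K) : ℝ) = (K:ℝ) ^ A := by
  simp [Fintype.card_fun]

lemma innerE (A K : ℕ) (i : Fin K) :
    ∑ g : Fin A → Fin K, (1 - if ∀ a, g a ∉ ({i} : Finset (Fin K)) then (1:ℝ) else 0)
      = (K:ℝ)^A - ((K - 1 : ℕ):ℝ)^A := by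
  rw [Finset.sum_sub_distrib, sumE, Finset.sum_const, card_univ, ← card_univ_fun A K]
  simp

lemma sum1 (A K : ℕ) :
    ∑ g : Fin A → Fin K, (nonemptyBins A K g : ℝ)
      = K * ((K:ℝ)^A - ((K - 1 : ℕ):ℝ)^A) := by
  simp_rw [nonempty_eq_sum]
  rw [Finset.sum_comm]
  rw [Finset.sum_congr rfl (fun i _ => innerE A K i), Finset.sum_const, card_univ]
  simp [Fintype.card_fin]

lemma prodE (A K : ℕ) (i j : Fin K) (g : Fin A → Fin K) :
    (if ∀ a, g a ∉ ({i} : Finset (Fin K)) then (1:ℝ) else 0)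
      * (if ∀ a, g a ∉ ({j} : Finset (Fin K)) then (1:ℝ) else 0)
    = (if ∀ a, g a ∉ ({i, j} : Finset (Fin K)) then (1:ℝ) else 0) := by
  split_ifs with h1 h2 h3 <;> simp_all

lemma offdiag (A K : ℕ) (i j : Fin K) (hij : i ≠ j) :
    ∑ g : Fin A → Fin K,
      (1 - if ∀ a, g a ∉ ({i} : Finset (Fin K)) then (1:ℝ) else 0)
        * (1 - if ∀ a, g a ∉ ({j} : Finset (Fin K)) then (1:ℝ) else 0)
      = (K:ℝ)^A - 2*((K - 1 : ℕ):ℝ)^A + ((K - 2 : ℕ):ℝ)^A := by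
  have expand : ∀ g : Fin A → Fin K,
      (1 - if ∀ a, g a ∉ ({i} : Finset (Fin K)) then (1:ℝ) else 0)
        * (1 - if ∀ a, g a ∉ ({j} : Finset (Fin K)) then (1:ℝ) else 0)
      = 1 - (if ∀ a, g a ∉ ({i} : Finset (Fin K)) then (1:ℝ) else 0)
          - (if ∀ a, g a ∉ ({j} : Finset (Fin K)) then (1:ℝ) else 0)
          + (if ∀ a, g a ∉ ({i, j} : Finset (Fin K)) then (1:ℝ) else 0) := by
    intro g; rw [← prodE A K i j g]; ring
  rw [Finset.sum_congr rfl (fun g _ => expand g)]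
  rw [Finset.sum_add_distrib, Finset.sum_sub_distrib, Finset.sum_sub_distrib,
    Finset.sum_const, card_univ, sumE, sumE, sumE]
  have hc : ({i, j} : Finset (Fin K)).card = 2 := by
    rw [Finset.card_insert_of_notMem (by simp [hij]), Finset.card_singleton]
  rw [hc, Finset.card_singleton, ← card_univ_fun A K]
  simp; ring

lemma diag (A K : ℕ) (i : Fin K) :
    ∑ g : Fin A → Fin K,
      (1 - if ∀ a, g a ∉ ({i} : Finset (Fin K)) then (1:ℝ) else 0)
        * (1 - if ∀ a, g a ∉ ({i} : Finset (Fin K)) then (1:ℝ) else 0)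
      = (K:ℝ)^A - ((K - 1 : ℕ):ℝ)^A := by
  have h : ∀ g : Fin A → Fin K,
      (1 - if ∀ a, g a ∉ ({i} : Finset (Fin K)) then (1:ℝ) else 0)
        * (1 - if ∀ a, g a ∉ ({i} : Finset (Fin K)) then (1:ℝ) else 0)
      = (1 - if ∀ a, g a ∉ ({i} : Finset (Fin K)) then (1:ℝ) else 0) := by
    intro g; split_ifs <;> ring
  rw [Finset.sum_congr rfl (fun g _ => h g), innerE]

lemma sum2 (A K : ℕ) :
    ∑ g : Fin A → Fin K, (nonemptyBins A K g : ℝ) ^ 2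
      = K * ((K:ℝ)^A - ((K - 1 : ℕ):ℝ)^A)
        + K * (K - 1) * ((K:ℝ)^A - 2*((K - 1 : ℕ):ℝ)^A + ((K - 2 : ℕ):ℝ)^A) := by
  simp_rw [nonempty_eq_sum, sq, Finset.sum_mul_sum]
  rw [Finset.sum_comm]
  have key : ∀ i : Fin K, ∑ g : Fin A → Fin K, ∑ j : Fin K,
      (1 - if ∀ a, g a ∉ ({i} : Finset (Fin K)) then (1:ℝ) else 0)
        * (1 - if ∀ a, g a ∉ ({j} : Finset (Fin K)) then (1:ℝ) else 0)
      = ((K:ℝ)^A - ((K - 1 : ℕ):ℝ)^A)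
        + (K - 1) * ((K:ℝ)^A - 2*((K - 1 : ℕ):ℝ)^A + ((K - 2 : ℕ):ℝ)^A) := by
    intro i
    rw [Finset.sum_comm]
    rw [← Finset.add_sum_erase _ _ (Finset.mem_univ i), _root_.diag]
    congr 1
    rw [Finset.sum_congr rfl (fun j hj => offdiag A K i j (by
      intro h; exact (Finset.mem_erase.mp hj).1 h.symm)), Finset.sum_const,
      Finset.card_erase_of_mem (Finset.mem_univ i), card_univ]
    have hK1 : 1 ≤ K := i.pos
    rw [nsmul_eq_mul, Fintype.card_fin]
    push_cast [Nat.cast_sub hK1]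
    ring
  rw [Finset.sum_congr rfl (fun i _ => key i), Finset.sum_const, card_univ]
  simp [Fintype.card_fin]
  ring

set_option maxHeartbeats 1600000 in
lemma keyineq (a k p q : ℝ) (ha : 100 ≤ a) (hk : 2000 ≤ k)
    (hp0 : 0 ≤ p) (hp1 : p ≤ 1) (hq0 : 0 ≤ q)
    (hplb : k - a ≤ k * p)
    (hqD : q * ((k-1)^2 + a) ≤ p^2 * (k-1)^2) :
    k*(k-1)*q + k*p - k^2*p^2 < 4*a^2/k := by
  have hk0 : (0:ℝ) < k := by linarith
  have hD0 : (0:ℝ) < (k-1)^2 + a := by nlinarith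
  have step2 : (k*(k-1)*q + k*p - k^2*p^2) * ((k-1)^2 + a)
      ≤ k*p*((k-1)^2 + a) - ((k-1)^2 + a*k)*(k*p)*p := by
    have h1 := mul_le_mul_of_nonneg_left hqD (by nlinarith : (0:ℝ) ≤ k*(k-1))
    nlinarith [h1]
  have h6 : k*((k-1)^2 + a) - ((k-1)^2 + a*k)*(k*p) ≤ a*(a*k - k + 1) := by
    have hco : (0:ℝ) ≤ (k-1)^2 + a*k := by nlinarith
    have h1 := mul_le_mul_of_nonneg_left hplb hco
    nlinarith [h1]
  have hco2 : (0:ℝ) ≤ a*(a*k - k + 1) := by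
    nlinarith [mul_nonneg (by linarith : (0:ℝ) ≤ a-1) hk0.le]
  have step3 : k * (k*p*((k-1)^2 + a) - ((k-1)^2 + a*k)*(k*p)*p) ≤ k * (k*a^2) := by
    have hkp0 : (0:ℝ) ≤ k*p := mul_nonneg hk0.le hp0
    have hkpk : k*p ≤ k := by nlinarith
    have h2 : (k*p) * (k*((k-1)^2 + a) - ((k-1)^2 + a*k)*(k*p)) ≤ (k*p) * (a*(a*k - k + 1)) :=
      mul_le_mul_of_nonneg_left h6 hkp0
    have h3 : (k*p) * (a*(a*k - k + 1)) ≤ k * (a*(a*k - k + 1)) :=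
      mul_le_mul_of_nonneg_right hkpk hco2
    nlinarith [h2, h3]
  have step4 : (k*(k-1)*q + k*p - k^2*p^2) * ((k-1)^2 + a) ≤ k * a^2 := by
    have h := (mul_le_mul_iff_right₀ hk0).mp step3
    nlinarith [step2, h]
  have hfin : (k*(k-1)*q + k*p - k^2*p^2) * k < 4 * a^2 := by
    have h1 : ((k*(k-1)*q + k*p - k^2*p^2) * k) * ((k-1)^2 + a) ≤ (k * a^2) * k := by
      nlinarith [step4]
    have ha2 : (0:ℝ) < a^2 := by nlinarith
    have hk2 : (0:ℝ) < 3*k^2 - 8*k + 4 := by nlinarith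
    have h2 : (k * a^2) * k < (4 * a^2) * ((k-1)^2 + a) := by nlinarith [mul_pos ha2 hk2]
    have h3 := lt_of_le_of_lt h1 h2
    exact (mul_lt_mul_iff_left₀ hD0).mp h3
  rw [lt_div_iff₀ hk0]
  nlinarith [hfin]

set_option maxHeartbeats 1600000 in
lemma analytic (A K : ℕ) (hA : 100 ≤ A) (hAK : 20*(A:ℝ) ≤ K) :
    (K:ℝ)*((K:ℝ)-1)*(((K:ℝ)-2)/(K:ℝ))^A + (K:ℝ)*(((K:ℝ)-1)/(K:ℝ))^A
      - (K:ℝ)^2*((((K:ℝ)-1)/(K:ℝ))^A)^2 < 4*(A:ℝ)^2/(K:ℝ) := by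
  set k : ℝ := (K:ℝ) with hkdef
  set a : ℝ := (A:ℝ) with hadef
  have ha : (100:ℝ) ≤ a := by rw [hadef]; exact_mod_cast hA
  have hk : (2000:ℝ) ≤ k := by nlinarith
  have hk0 : (0:ℝ) < k := by linarith
  have hk1 : (0:ℝ) < k - 1 := by linarith
  have hkne : k ≠ 0 := ne_of_gt hk0
  have hk1ne : k - 1 ≠ 0 := ne_of_gt hk1
  set p : ℝ := ((k-1)/k)^A with hp
  set q : ℝ := ((k-2)/k)^A with hq
  set s : ℝ := 1/(k-1)^2 with hs
  set t : ℝ := a*s with ht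
  have hs0 : 0 < s := by positivity
  have ht0 : 0 < t := by positivity
  have ht1 : 0 < 1 + t := by linarith
  have htD : (1 + t) * (k-1)^2 = (k-1)^2 + a := by
    rw [ht, hs]; field_simp
  have hp0 : 0 ≤ p := by positivity
  have hp1 : p ≤ 1 := by
    apply pow_le_one₀ (by positivity)
    rw [div_le_one hk0]; linarith
  have hq0 : 0 ≤ q := by
    rw [hq]; apply pow_nonneg; apply div_nonneg <;> linarith
  have hplb : k - a ≤ k * p := by
    have h1k : 1/k ≤ 1 := by rw [div_le_one hk0]; linarith
    have h1kp : (0:ℝ) < 1/k := by positivity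
    have hb := one_add_mul_le_pow (a := -(1/k)) (by linarith) A
    have h1 : (1 + -(1/k)) = (k-1)/k := by field_simp; ring
    rw [h1, ← hadef, ← hp] at hb
    have h2 : k * (1 + a * -(1/k)) ≤ k * p := mul_le_mul_of_nonneg_left hb hk0.le
    calc k - a = k * (1 + a * -(1/k)) := by field_simp; ring
    _ ≤ k * p := h2
  have hqid : q = p^2 * (1-s)^A := by
    have h1 : (k-2)/k = ((k-1)/k)^2 * (1-s) := by
      rw [hs]
      field_simp
      ring
    rw [hq, h1, mul_pow, ← pow_mul, mul_comm 2 A, pow_mul]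
  have hs1 : s < 1/1000 := by
    rw [hs, div_lt_div_iff₀ (by positivity) (by norm_num)]
    nlinarith
  have hsA : (1-s)^A ≤ 1/(1+t) := by
    have h1s : (0:ℝ) < 1 - s := by linarith
    have hss : (0:ℝ) ≤ s/(1-s) := by positivity
    have hb := one_add_mul_le_pow (a := s/(1-s)) (by linarith) A
    have h2 : 1 + s/(1-s) = 1/(1-s) := by field_simp; ring
    rw [h2] at hb
    have h3 : 1 + t ≤ (1/(1-s))^A := by
      refine le_trans ?_ hb
      have hss2 : s ≤ s/(1-s) := by
        rw [le_div_iff₀ h1s]; nlinarith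
      have hA0 : (0:ℝ) ≤ (A:ℝ) := by positivity
      rw [ht, hadef]
      nlinarith
    have h4 : (1/(1-s))^A = ((1-s)^A)⁻¹ := by rw [one_div, inv_pow]
    rw [h4] at h3
    have h5 : 0 < (1-s)^A := by positivity
    rw [div_eq_inv_mul, mul_one, ← inv_inv ((1-s)^A)]
    exact inv_anti₀ ht1 h3
  have hqD : q * ((k-1)^2 + a) ≤ p^2 * (k-1)^2 := by
    rw [hqid, ← htD]
    have h1 : p^2 * (1-s)^A * ((1+t) * (k-1)^2) ≤ p^2 * (1/(1+t)) * ((1+t) * (k-1)^2) := by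
      apply mul_le_mul_of_nonneg_right _ (by positivity)
      exact mul_le_mul_of_nonneg_left hsA (by positivity)
    refine h1.trans (le_of_eq ?_)
    field_simp
  exact keyineq a k p q ha hk hp0 hp1 hq0 hplb hqD

/-- If `100 ≤ A ≤ K/20`, then for `A` balls thrown independently and uniformly into `K`
bins, the variance of the number of nonempty bins is strictly less than `4A²/K`. -/
theorem stmt_14 (A K : ℕ) (hA : 100 ≤ A) (hAK : (A : ℝ) ≤ K / 20) :
    (∑ g : Fin A → Fin K, (nonemptyBins A K g : ℝ) ^ 2) / (K : ℝ) ^ A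
        - ((∑ g : Fin A → Fin K, (nonemptyBins A K g : ℝ)) / (K : ℝ) ^ A) ^ 2
      < 4 * (A : ℝ) ^ 2 / K := by
  have hAK' : 20*(A:ℝ) ≤ K := by
    have h20 : (0:ℝ) < 20 := by norm_num
    rw [le_div_iff₀ h20] at hAK
    linarith
  have hA' : (100:ℝ) ≤ (A:ℝ) := by exact_mod_cast hA
  have hkR : (2000:ℝ) ≤ (K:ℝ) := by nlinarith
  have hK2 : 2 ≤ K := by exact_mod_cast (by linarith : (2:ℝ) ≤ (K:ℝ))
  have e1 : ((K - 1 : ℕ):ℝ) = (K:ℝ) - 1 := by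
    push_cast [Nat.cast_sub (by omega : 1 ≤ K)]; ring
  have e2 : ((K - 2 : ℕ):ℝ) = (K:ℝ) - 2 := by
    push_cast [Nat.cast_sub hK2]; ring
  rw [sum1, sum2, e1, e2]
  have hk0 : (0:ℝ) < (K:ℝ) := by linarith
  have hKA0 : (0:ℝ) < (K:ℝ)^A := by positivity
  have hKAne : (K:ℝ)^A ≠ 0 := ne_of_gt hKA0
  have heq : ((K:ℝ) * ((K:ℝ)^A - ((K:ℝ)-1)^A)
        + (K:ℝ) * ((K:ℝ) - 1) * ((K:ℝ)^A - 2*((K:ℝ)-1)^A + ((K:ℝ)-2)^A)) / (K:ℝ)^A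
      - ((K:ℝ) * ((K:ℝ)^A - ((K:ℝ)-1)^A) / (K:ℝ)^A) ^ 2
      = (K:ℝ)*((K:ℝ)-1)*(((K:ℝ)-2)/(K:ℝ))^A + (K:ℝ)*(((K:ℝ)-1)/(K:ℝ))^A
        - (K:ℝ)^2*((((K:ℝ)-1)/(K:ℝ))^A)^2 := by
    rw [div_pow ((K:ℝ)-1), div_pow ((K:ℝ)-2)]
    field_simp
    ring
  rw [heq]
  exact analytic A K hA hAK'
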